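/- (Effect of shuffling labels.) Let D⁰ = {x⁰₊ₖ, x⁰₋ₖ}ₖ₌₁^K and D¹ = {x¹₊ₖ, x¹₋ₖ}ₖ₌₁^K be two K-shot task datasets, and suppose the class-to-label assignment in D¹ is swapped: in L_{D¹} the positive samples x¹₊ₖ carry label (0,1) and the negative samples x¹₋ₖ carry label (1,0), while D⁰ keeps the standard assignment. If η₀ = η₁, then ∇_{η₀}(L_{D⁰} − L_{D¹}) = −(1/(2K)) Σₖ₌₁^K ( D_ω (x̄⁰₊ₖ − x̄⁰₋ₖ) + D_ω (x̄¹₊ₖ − x̄¹₋ₖ) ). In particular, the differences appearing in the gradient are between positive and negative samples within each task, rather than between the near-identical backgrounds of corresponding samples across tasks. -/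

import Mathlib

open scoped InnerProductSpace

/-- Binary softmax, first component. -/
noncomputable def p0 (u0 u1 : ℝ) : ℝ := Real.exp u0 / (Real.exp u0 + Real.exp u1)

/-- Binary softmax, second component. -/
noncomputable def p1 (u0 u1 : ℝ) : ℝ := Real.exp u1 / (Real.exp u0 + Real.exp u1)

/-- Cross-entropy loss ℓ(u; y) = −y₀ log p₀(u) − y₁ log p₁(u), with label (y0, y1)
and logits (u0, u1). -/
noncomputable def xent (y0 y1 u0 u1 : ℝ) : ℝ :=
  -(y0 * Real.log (p0 u0 u1)) - y1 * Real.log (p1 u0 u1)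

/-- The valid index l + a ∈ Fin L, for l ∈ Fin (L−M+1) and a ∈ Fin M with M ≤ L. -/
def idx {L M : ℕ} (hL : M ≤ L) (l : Fin (L - M + 1)) (a : Fin M) : Fin L :=
  ⟨l.val + a.val, by have h1 := l.isLt; have h2 := a.isLt; omega⟩

/-- Row-major flattening of an L×L image, indexed by pairs. -/
def flat {L : ℕ} (x : Fin L → Fin L → ℝ) : EuclideanSpace ℝ (Fin L × Fin L) :=
  WithLp.toLp 2 (fun m => x m.1 m.2)

/-- The sparse Toeplitz matrix D_ω representing the valid convolution with filter ω. -/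
noncomputable def Dmat {L M : ℕ} (hM : 1 ≤ M) (hL : M ≤ L) (ω : Fin M × Fin M → ℝ) :
    Matrix (Fin (L - M + 1) × Fin (L - M + 1)) (Fin L × Fin L) ℝ :=
  fun l m =>
    if h : l.1.val ≤ m.1.val ∧ m.1.val - l.1.val ≤ M - 1 ∧
        l.2.val ≤ m.2.val ∧ m.2.val - l.2.val ≤ M - 1 then
      ω (⟨m.1.val - l.1.val, by omega⟩, ⟨m.2.val - l.2.val, by omega⟩)
    else 0

/-- The flattened feature map z̄(x) = D_ω x̄. -/
noncomputable def zbar {L M : ℕ} (hM : 1 ≤ M) (hL : M ≤ L) (ω : Fin M × Fin M → ℝ)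
    (x : Fin L → Fin L → ℝ) : EuclideanSpace ℝ (Fin (L - M + 1) × Fin (L - M + 1)) :=
  WithLp.toLp 2 ((Dmat hM hL ω).mulVec (flat x))

/-- Task loss of a K-shot dataset with positive samples xp (label (1,0)) and negative
samples xm (label (0,1)): L_D = (1/K) Σₖ ( ℓ(xpₖ; (1,0)) + ℓ(xmₖ; (0,1)) ), where the
logits of a sample x are (η₀·z̄(x), η₁·z̄(x)). -/
noncomputable def taskLoss {L M K : ℕ} (hM : 1 ≤ M) (hL : M ≤ L) (ω : Fin M × Fin M → ℝ)
    (xp xm : Fin K → Fin L → Fin L → ℝ)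
    (η0 η1 : EuclideanSpace ℝ (Fin (L - M + 1) × Fin (L - M + 1))) : ℝ :=
  (1 / (K : ℝ)) * ∑ k : Fin K,
    (xent 1 0 ⟪η0, zbar hM hL ω (xp k)⟫_ℝ ⟪η1, zbar hM hL ω (xp k)⟫_ℝ +
     xent 0 1 ⟪η0, zbar hM hL ω (xm k)⟫_ℝ ⟪η1, zbar hM hL ω (xm k)⟫_ℝ)

/-- Task loss under the swapped class-to-label assignment: positive samples xp carry
label (0,1) and negative samples xm carry label (1,0). -/
noncomputable def taskLossSwapped {L M K : ℕ} (hM : 1 ≤ M) (hL : M ≤ L)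
    (ω : Fin M × Fin M → ℝ) (xp xm : Fin K → Fin L → Fin L → ℝ)
    (η0 η1 : EuclideanSpace ℝ (Fin (L - M + 1) × Fin (L - M + 1))) : ℝ :=
  (1 / (K : ℝ)) * ∑ k : Fin K,
    (xent 0 1 ⟪η0, zbar hM hL ω (xp k)⟫_ℝ ⟪η1, zbar hM hL ω (xp k)⟫_ℝ +
     xent 1 0 ⟪η0, zbar hM hL ω (xm k)⟫_ℝ ⟪η1, zbar hM hL ω (xm k)⟫_ℝ)
section Aux

variable {E : Type*} [NormedAddCommGroup E] [InnerProductSpace ℝ E] [CompleteSpace E]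
variable {f g : E → ℝ} {f' g' x : E}

lemma xent10_eq (u c : ℝ) : xent 1 0 u c = Real.log (Real.exp u + Real.exp c) - u := by
  unfold xent p0 p1
  simp only [zero_mul, one_mul, sub_zero]
  rw [Real.log_div (Real.exp_ne_zero _) (by positivity), Real.log_exp]
  ring

lemma xent01_eq (u c : ℝ) : xent 0 1 u c = Real.log (Real.exp u + Real.exp c) - c := by
  unfold xent p0 p1
  simp only [zero_mul, one_mul, neg_zero, zero_sub]
  rw [Real.log_div (Real.exp_ne_zero _) (by positivity), Real.log_exp]
  ring

lemma hasDerivAt_logsum (c t : ℝ) :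
    HasDerivAt (fun u => Real.log (Real.exp u + Real.exp c))
      (Real.exp t / (Real.exp t + Real.exp c)) t :=
  ((Real.hasDerivAt_exp t).add_const _).log (by positivity)

lemma hasDerivAt_xent10 (c t : ℝ) :
    HasDerivAt (fun u => xent 1 0 u c) (Real.exp t / (Real.exp t + Real.exp c) - 1) t := by
  simp only [xent10_eq]
  exact (hasDerivAt_logsum c t).sub (hasDerivAt_id t)

lemma hasDerivAt_xent01 (c t : ℝ) :
    HasDerivAt (fun u => xent 0 1 u c) (Real.exp t / (Real.exp t + Real.exp c)) t := by
  simp only [xent01_eq]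
  exact (hasDerivAt_logsum c t).sub_const c

lemma hga_comp_inner (z : E) (y0 y1 c d : ℝ)
    (hφ : HasDerivAt (fun u => xent y0 y1 u c) d ⟪x, z⟫_ℝ) :
    HasGradientAt (fun e : E => xent y0 y1 ⟪e, z⟫_ℝ c) (d • z) x := by
  rw [hasGradientAt_iff_hasFDerivAt]
  have hz : HasFDerivAt (fun e : E => ⟪e, z⟫_ℝ) (innerSL ℝ z) x :=
    (innerSL ℝ z).hasFDerivAt.congr_of_eventuallyEq
      (Filter.Eventually.of_forall fun e => (real_inner_comm e z).symm)
  have hcomp := hφ.comp_hasFDerivAt x hz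
  refine hcomp.congr_fderiv ?_
  ext w
  simp [InnerProductSpace.toDual_apply_apply, real_inner_smul_left, real_inner_comm]

lemma hga_sub (hf : HasGradientAt f f' x) (hg : HasGradientAt g g' x) :
    HasGradientAt (fun y => f y - g y) (f' - g') x := by
  rw [hasGradientAt_iff_hasFDerivAt] at *
  simpa [map_sub] using hf.fun_sub hg

lemma hga_add (hf : HasGradientAt f f' x) (hg : HasGradientAt g g' x) :
    HasGradientAt (fun y => f y + g y) (f' + g') x := by
  rw [hasGradientAt_iff_hasFDerivAt] at *
  simpa [map_add] using hf.fun_add hg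

lemma hga_const_mul (a : ℝ) (hf : HasGradientAt f f' x) :
    HasGradientAt (fun y => a * f y) (a • f') x := by
  rw [hasGradientAt_iff_hasFDerivAt] at *
  simpa [map_smul] using hf.const_mul a

lemma hga_sum {ι : Type*} (s : Finset ι) (F : ι → E → ℝ) (F' : ι → E)
    (h : ∀ i ∈ s, HasGradientAt (F i) (F' i) x) :
    HasGradientAt (fun y => ∑ i ∈ s, F i y) (∑ i ∈ s, F' i) x := by
  rw [hasGradientAt_iff_hasFDerivAt]
  simpa [map_sum] using
    HasFDerivAt.fun_sum (fun i hi => hasGradientAt_iff_hasFDerivAt.mp (h i hi))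

end Aux

lemma half_coeff (t : ℝ) : Real.exp t / (Real.exp t + Real.exp t) = 1 / 2 := by
  have := Real.exp_pos t
  rw [div_eq_iff (by positivity)]
  ring

lemma zbar_sub {L M : ℕ} (hM : 1 ≤ M) (hL : M ≤ L) (ω : Fin M × Fin M → ℝ)
    (a b : Fin L → Fin L → ℝ) :
    zbar hM hL ω (fun i j => a i j - b i j) = zbar hM hL ω a - zbar hM hL ω b := by
  ext l
  simp [zbar, flat, Matrix.mulVec, dotProduct, mul_sub, Finset.sum_sub_distrib]

/-- Effect of shuffling labels: if D¹ uses the swapped label assignment while D⁰ keeps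
the standard one, and η₀ = η₁, then
∇_{η₀}(L_{D⁰} − L_{D¹}) = −(1/(2K)) Σₖ ( D_ω(x̄⁰₊ₖ − x̄⁰₋ₖ) + D_ω(x̄¹₊ₖ − x̄¹₋ₖ) ). -/
theorem shuffled_grad (L M K : ℕ) (hM : 1 ≤ M) (hL : M ≤ L)
    (ω : Fin M × Fin M → ℝ)
    (x0p x0m x1p x1m : Fin K → Fin L → Fin L → ℝ)
    (η0 η1 : EuclideanSpace ℝ (Fin (L - M + 1) × Fin (L - M + 1)))
    (h : η0 = η1) :
    gradient (fun e : EuclideanSpace ℝ (Fin (L - M + 1) × Fin (L - M + 1)) =>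
        taskLoss hM hL ω x0p x0m e η1 - taskLossSwapped hM hL ω x1p x1m e η1) η0 =
      (-(1 / (2 * (K : ℝ)))) • ∑ k : Fin K,
        (zbar hM hL ω (fun i j => x0p k i j - x0m k i j) +
         zbar hM hL ω (fun i j => x1p k i j - x1m k i j)) := by
  subst h
  have coeff10 : ∀ t : ℝ, Real.exp t / (Real.exp t + Real.exp t) - 1 = -(1/2) := by
    intro t; rw [half_coeff]; norm_num
  have hA : ∀ z : EuclideanSpace ℝ (Fin (L - M + 1) × Fin (L - M + 1)),
      HasGradientAt (fun e : EuclideanSpace ℝ (Fin (L - M + 1) × Fin (L - M + 1)) =>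
        xent 1 0 ⟪e, z⟫_ℝ ⟪η0, z⟫_ℝ) ((-(1/2) : ℝ) • z) η0 := by
    intro z
    have := hga_comp_inner (x := η0) z 1 0 ⟪η0, z⟫_ℝ _
      (hasDerivAt_xent10 ⟪η0, z⟫_ℝ ⟪η0, z⟫_ℝ)
    rwa [coeff10] at this
  have hB : ∀ z : EuclideanSpace ℝ (Fin (L - M + 1) × Fin (L - M + 1)),
      HasGradientAt (fun e : EuclideanSpace ℝ (Fin (L - M + 1) × Fin (L - M + 1)) =>
        xent 0 1 ⟪e, z⟫_ℝ ⟪η0, z⟫_ℝ) (((1:ℝ)/2) • z) η0 := by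
    intro z
    have := hga_comp_inner (x := η0) z 0 1 ⟪η0, z⟫_ℝ _
      (hasDerivAt_xent01 ⟪η0, z⟫_ℝ ⟪η0, z⟫_ℝ)
    rwa [half_coeff] at this
  have key : HasGradientAt
      (fun e : EuclideanSpace ℝ (Fin (L - M + 1) × Fin (L - M + 1)) =>
        taskLoss hM hL ω x0p x0m e η0 - taskLossSwapped hM hL ω x1p x1m e η0)
      ((1/(K:ℝ)) • (∑ k : Fin K, ((-(1/2) : ℝ) • zbar hM hL ω (x0p k)
          + ((1:ℝ)/2) • zbar hM hL ω (x0m k)))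
       - (1/(K:ℝ)) • (∑ k : Fin K, (((1:ℝ)/2) • zbar hM hL ω (x1p k)
          + (-(1/2) : ℝ) • zbar hM hL ω (x1m k)))) η0 := by
    unfold taskLoss taskLossSwapped
    exact hga_sub
      (hga_const_mul _ (hga_sum _ _ _ (fun k _ => hga_add (hA _) (hB _))))
      (hga_const_mul _ (hga_sum _ _ _ (fun k _ => hga_add (hB _) (hA _))))
  rw [key.gradient]
  simp only [zbar_sub]
  rw [Finset.smul_sum, Finset.smul_sum, Finset.smul_sum, ← Finset.sum_sub_distrib]
  refine Finset.sum_congr rfl fun k _ => ?_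
  module
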